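/- Let q, a, b, c ∈ ℂ with 0 < |q| < 1, a ≠ 0, b ≠ 0, c ≠ 0, |c/(a b)| < 1, and 1 - c q^j ≠ 0 for all j ≥ 0, and let k ∈ ℕ. Then the k-th q-derivative with respect to c of the function c ↦ ∑_{n=0}^{∞} (a;q)_n (b;q)_n c^n / ((q;q)_n (c;q)_n (a b)^n) (the q-Gauss series ₂φ₁(a,b;c;q,c/(ab))) equals (1/(c;q)_k) · ∑_{i=0}^{k} [k choose i]_q ((a;q)_i (b;q)_i (c;q)_i / ((a b)^i (c q^k;q)_i)) · ∑_{n=0}^{∞} (a q^i;q)_n (b q^i;q)_n (q^{n+i};q)_{k-i} (c/(a b))^n / ((c q^{k+i};q)_n (q;q)_n). -/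

import Mathlib

/-- The finite q-shifted factorial (a;q)_n = ∏_{j=0}^{n-1} (1 - a q^j). -/
noncomputable def qPoch (q a : ℂ) (n : ℕ) : ℂ :=
  ∏ j ∈ Finset.range n, (1 - a * q ^ j)

/-- The q-binomial coefficient [n choose k]_q = (q;q)_n / ((q;q)_k (q;q)_{n-k}). -/
noncomputable def qBinom (q : ℂ) (n k : ℕ) : ℂ :=
  qPoch q q n / (qPoch q q k * qPoch q q (n - k))

/-- The q-differential operator: (D_q f)(c) = (f(c) - f(qc))/c. -/
noncomputable def Dq (q : ℂ) (f : ℂ → ℂ) : ℂ → ℂ :=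
  fun x => (f x - f (q * x)) / x

namespace S14

/-- Descending product ∏_{j<i} (1 - q^(n-j)). -/
noncomputable def Ppow (q : ℂ) (n i : ℕ) : ℂ :=
  ∏ j ∈ Finset.range i, (1 - q ^ (n - j))

lemma qPoch_zero (q x : ℂ) : qPoch q x 0 = 1 := by simp [qPoch]

lemma qPoch_succ (q x : ℂ) (n : ℕ) :
    qPoch q x (n + 1) = qPoch q x n * (1 - x * q ^ n) := Finset.prod_range_succ _ _

lemma qPoch_succ' (q x : ℂ) (n : ℕ) :
    qPoch q x (n + 1) = (1 - x) * qPoch q (x * q) n := by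
  rw [qPoch, Finset.prod_range_succ']
  simp only [pow_zero, mul_one]
  rw [mul_comm]
  congr 1
  apply Finset.prod_congr rfl
  intro j _
  ring

lemma qPoch_add (q x : ℂ) (m n : ℕ) :
    qPoch q x (m + n) = qPoch q x m * qPoch q (x * q ^ m) n := by
  induction n with
  | zero => simp [qPoch_zero]
  | succ n ih =>
      rw [show m + (n + 1) = (m + n) + 1 by ring, qPoch_succ, ih, qPoch_succ, mul_assoc]
      congr 2
      rw [mul_assoc, ← pow_add]

lemma one_sub_pow_ne {q : ℂ} (hq1 : ‖q‖ < 1) {j : ℕ} (hj : j ≠ 0) :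
    (1 : ℂ) - q ^ j ≠ 0 := by
  intro h
  have h1 : q ^ j = 1 := by linear_combination -h
  have : ‖q ^ j‖ < 1 := by
    rw [norm_pow]
    exact pow_lt_one₀ (norm_nonneg q) hq1 hj
  rw [h1] at this
  simp at this

lemma qq_factor_ne {q : ℂ} (hq1 : ‖q‖ < 1) : ∀ j : ℕ, 1 - q * q ^ j ≠ 0 := by
  intro j
  rw [← pow_succ']
  exact one_sub_pow_ne hq1 (Nat.succ_ne_zero j)

lemma qq_ne {q : ℂ} (hq1 : ‖q‖ < 1) (n : ℕ) : qPoch q q n ≠ 0 := by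
  rw [qPoch]
  exact Finset.prod_ne_zero_iff.2 fun j _ => qq_factor_ne hq1 j

lemma qPoch_ne {q x : ℂ} (hx : ∀ j : ℕ, 1 - x * q ^ j ≠ 0) (n : ℕ) : qPoch q x n ≠ 0 :=
  Finset.prod_ne_zero_iff.2 fun j _ => hx j

lemma qBinom_zero' {q : ℂ} (hq1 : ‖q‖ < 1) (n : ℕ) : qBinom q n 0 = 1 := by
  rw [qBinom, qPoch_zero, one_mul, Nat.sub_zero, div_self (qq_ne hq1 n)]

lemma qBinom_self' {q : ℂ} (hq1 : ‖q‖ < 1) (n : ℕ) : qBinom q n n = 1 := by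
  rw [qBinom, Nat.sub_self, qPoch_zero, mul_one, div_self (qq_ne hq1 n)]

lemma qq_succ (q : ℂ) (n : ℕ) : qPoch q q (n + 1) = qPoch q q n * (1 - q ^ (n + 1)) := by
  rw [qPoch_succ, ← pow_succ']

lemma qBinom_pascal' {q : ℂ} (hq1 : ‖q‖ < 1) {k j : ℕ} (hj : j + 1 ≤ k) :
    qBinom q (k + 1) (j + 1) = qBinom q k j + q ^ (j + 1) * qBinom q k (j + 1) := by
  have h1 : k - j = (k - (j + 1)) + 1 := by omega
  have h2 : (k + 1) - (j + 1) = (k - (j+1)) + 1 := by omega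
  rw [qBinom, qBinom, qBinom, h1, h2, qq_succ q k, qq_succ q j, qq_succ q (k - (j+1))]
  have e1 := qq_ne hq1 k
  have e2 := qq_ne hq1 j
  have e3 := qq_ne hq1 (k - (j + 1))
  have e4 := one_sub_pow_ne hq1 (Nat.succ_ne_zero j)
  have e5 := one_sub_pow_ne hq1 (Nat.succ_ne_zero (k - (j+1)))
  have hpow : q ^ (k + 1) = q ^ (j + 1) * q ^ (k - (j + 1) + 1) := by
    rw [← pow_add]; congr 1; omega
  rw [hpow]
  field_simp
  ring

lemma qLeibniz {q : ℂ} (hq0 : 0 < ‖q‖) (hq1 : ‖q‖ < 1) (f g : ℂ → ℂ) :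
    ∀ k : ℕ, ∀ t : ℂ, t ≠ 0 →
      (Dq q)^[k] (fun s => f s * g s) t =
        ∑ i ∈ Finset.range (k + 1),
          qBinom q k i * ((Dq q)^[i] f t * (Dq q)^[k - i] g (q ^ i * t)) := by
  have hqne : q ≠ 0 := by
    intro h; rw [h] at hq0; simp at hq0
  intro k
  induction k with
  | zero =>
      intro t ht
      simp [qBinom_zero' hq1]
  | succ k ih =>
      intro t ht
      have hqt : q * t ≠ 0 := mul_ne_zero hqne ht
      rw [Function.iterate_succ_apply']
      show ((Dq q)^[k] (fun s => f s * g s) t - (Dq q)^[k] (fun s => f s * g s) (q * t)) / t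
        = _
      rw [ih t ht, ih (q * t) hqt, ← Finset.sum_sub_distrib, Finset.sum_div]
      have key : ∀ i ∈ Finset.range (k + 1),
          (qBinom q k i * ((Dq q)^[i] f t * (Dq q)^[k - i] g (q ^ i * t)) -
            qBinom q k i * ((Dq q)^[i] f (q * t) * (Dq q)^[k - i] g (q ^ i * (q * t)))) / t
          = q ^ i * qBinom q k i * ((Dq q)^[i] f t * (Dq q)^[(k - i) + 1] g (q ^ i * t)) +
            qBinom q k i * ((Dq q)^[i + 1] f t * (Dq q)^[k - i] g (q ^ (i + 1) * t)) := by
        intro i _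
        have hsi : q ^ i * t ≠ 0 := mul_ne_zero (pow_ne_zero _ hqne) ht
        have e1 : (Dq q)^[k - i] g (q ^ i * t) - (Dq q)^[k - i] g (q ^ (i + 1) * t)
            = (q ^ i * t) * ((Dq q)^[(k - i) + 1] g (q ^ i * t)) := by
          rw [Function.iterate_succ_apply']
          show _ = (q ^ i * t) *
            (((Dq q)^[k - i] g (q ^ i * t) - (Dq q)^[k - i] g (q * (q ^ i * t))) / (q ^ i * t))
          rw [show q * (q ^ i * t) = q ^ (i + 1) * t by ring]
          field_simp
        have e2 : (Dq q)^[i] f t - (Dq q)^[i] f (q * t) = t * ((Dq q)^[i + 1] f t) := by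
          rw [Function.iterate_succ_apply']
          show _ = t * (((Dq q)^[i] f t - (Dq q)^[i] f (q * t)) / t)
          field_simp
        rw [show q ^ i * (q * t) = q ^ (i + 1) * t by ring, div_eq_iff ht]
        linear_combination (qBinom q k i * (Dq q)^[i] f t) * e1 +
          (qBinom q k i * (Dq q)^[k - i] g (q ^ (i + 1) * t)) * e2
      rw [Finset.sum_congr rfl key, Finset.sum_add_distrib]
      rw [Finset.sum_range_succ'
        (fun i => q ^ i * qBinom q k i * ((Dq q)^[i] f t * (Dq q)^[(k - i) + 1] g (q ^ i * t))) k]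
      rw [Finset.sum_range_succ
        (fun i => qBinom q k i * ((Dq q)^[i + 1] f t * (Dq q)^[k - i] g (q ^ (i + 1) * t))) k]
      rw [Finset.sum_range_succ'
        (fun i => qBinom q (k+1) i * ((Dq q)^[i] f t * (Dq q)^[k + 1 - i] g (q ^ i * t))) (k+1)]
      rw [Finset.sum_range_succ
        (fun i => qBinom q (k+1) (i+1) * ((Dq q)^[i+1] f t * (Dq q)^[k + 1 - (i+1)] g (q ^ (i+1) * t))) k]
      have hA0 : q ^ 0 * qBinom q k 0 * ((Dq q)^[0] f t * (Dq q)^[(k - 0) + 1] g (q ^ 0 * t))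
          = qBinom q (k+1) 0 * ((Dq q)^[0] f t * (Dq q)^[k + 1 - 0] g (q ^ 0 * t)) := by
        rw [qBinom_zero' hq1, qBinom_zero' hq1]
        norm_num
      have hBk : qBinom q k k * ((Dq q)^[k + 1] f t * (Dq q)^[k - k] g (q ^ (k + 1) * t))
          = qBinom q (k+1) (k+1) * ((Dq q)^[k+1] f t * (Dq q)^[k + 1 - (k+1)] g (q ^ (k+1) * t)) := by
        rw [qBinom_self' hq1, qBinom_self' hq1]
        norm_num
      have hmid : ∀ i ∈ Finset.range k,
          q ^ (i+1) * qBinom q k (i+1) * ((Dq q)^[i+1] f t * (Dq q)^[(k - (i+1)) + 1] g (q ^ (i+1) * t)) +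
            qBinom q k i * ((Dq q)^[i + 1] f t * (Dq q)^[k - i] g (q ^ (i + 1) * t))
          = qBinom q (k+1) (i+1) * ((Dq q)^[i+1] f t * (Dq q)^[k + 1 - (i+1)] g (q ^ (i+1) * t)) := by
        intro i hi
        have hik : i + 1 ≤ k := Finset.mem_range.1 hi
        have h3 : (k - (i+1)) + 1 = k - i := by omega
        have h4 : k + 1 - (i+1) = k - i := by omega
        rw [h3, h4, qBinom_pascal' hq1 hik]
        ring
      rw [hA0, hBk, ← Finset.sum_congr rfl hmid, Finset.sum_add_distrib]
      ring

lemma Ppow_succ (q : ℂ) (n i : ℕ) :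
    Ppow q n (i + 1) = Ppow q n i * (1 - q ^ (n - i)) := Finset.prod_range_succ _ _

lemma Ppow_zero_of_lt {q : ℂ} {n i : ℕ} (h : n < i) : Ppow q n i = 0 := by
  rw [Ppow]
  apply Finset.prod_eq_zero (Finset.mem_range.2 h)
  simp [Nat.sub_self]

lemma Ppow_ne {q : ℂ} (hq1 : ‖q‖ < 1) (m i : ℕ) : Ppow q (m + i) i ≠ 0 := by
  apply Finset.prod_ne_zero_iff.2
  intro j hj
  have hj' : j < i := Finset.mem_range.1 hj
  exact one_sub_pow_ne hq1 (by omega)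

lemma qq_split (q : ℂ) (m i : ℕ) :
    qPoch q q (m + i) = qPoch q q m * Ppow q (m + i) i := by
  induction i with
  | zero => simp [Ppow]
  | succ i ih =>
      have h : Ppow q (m + (i+1)) (i + 1) = Ppow q (m + i) i * (1 - q ^ (m + i + 1)) := by
        rw [Ppow, Finset.prod_range_succ']
        have h0 : m + (i + 1) - 0 = m + i + 1 := by omega
        rw [h0]
        congr 1
        rw [Ppow]
        apply Finset.prod_congr rfl
        intro j _
        congr 2
        omega
      rw [show m + (i + 1) = (m + i) + 1 by ring, qq_succ, ih,
        show (m + i) + 1 = m + (i+1) by ring, h]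
      rw [show m + (i+1) = m + i + 1 by ring]
      ring

lemma Dq_pow {q : ℂ} (hqne : q ≠ 0) (n : ℕ) :
    ∀ i : ℕ, ∀ t : ℂ, t ≠ 0 →
      (Dq q)^[i] (fun s => s ^ n) t = Ppow q n i * t ^ (n - i) := by
  intro i
  induction i with
  | zero => intro t ht; simp [Ppow]
  | succ i ih =>
      intro t ht
      have hqt : q * t ≠ 0 := mul_ne_zero hqne ht
      rw [Function.iterate_succ_apply']
      show ((Dq q)^[i] (fun s => s ^ n) t - (Dq q)^[i] (fun s => s ^ n) (q * t)) / t = _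
      rw [ih t ht, ih (q * t) hqt, Ppow_succ]
      rcases Nat.lt_or_ge i n with h | h
      · have hm : n - i = (n - (i + 1)) + 1 := by omega
        rw [hm, mul_pow]
        have h2 : n - (i + 1) + 1 - 1 = n - (i+1) := by omega
        field_simp
        ring
      · have h1 : n - i = 0 := by omega
        have h2 : n - (i + 1) = 0 := by omega
        rw [h1, h2]
        simp

lemma Dq_invPoch {q : ℂ} (hqne : q ≠ 0) (n : ℕ) :
    ∀ i : ℕ, ∀ t : ℂ, t ≠ 0 → (∀ j : ℕ, 1 - t * q ^ j ≠ 0) →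
      (Dq q)^[i] (fun s => (qPoch q s n)⁻¹) t = qPoch q (q ^ n) i / qPoch q t (n + i) := by
  intro i
  induction i with
  | zero =>
      intro t ht htq
      simp only [Function.iterate_zero, id_eq]
      rw [qPoch_zero, Nat.add_zero, one_div]
  | succ i ih =>
      intro t ht htq
      have hqt : q * t ≠ 0 := mul_ne_zero hqne ht
      have hqtq : ∀ j : ℕ, 1 - (q * t) * q ^ j ≠ 0 := by
        intro j
        have := htq (j + 1)
        rw [pow_succ'] at this
        convert this using 2
        ring
      have hne : ∀ m : ℕ, qPoch q t m ≠ 0 :=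
        fun m => Finset.prod_ne_zero_iff.2 fun j _ => htq j
      rw [Function.iterate_succ_apply']
      show ((Dq q)^[i] (fun s => (qPoch q s n)⁻¹) t
          - (Dq q)^[i] (fun s => (qPoch q s n)⁻¹) (q * t)) / t = _
      rw [ih t ht htq, ih (q * t) hqt hqtq]
      have hsplit : qPoch q t (n + i + 1) = (1 - t) * qPoch q (t * q) (n + i) := qPoch_succ' _ _ _
      have hqt_comm : qPoch q (q * t) (n + i) = qPoch q (t * q) (n + i) := by rw [mul_comm]
      have hsucc : qPoch q t (n + i + 1) = qPoch q t (n + i) * (1 - t * q ^ (n + i)) :=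
        qPoch_succ _ _ _
      have hQsucc : qPoch q (q ^ n) (i + 1) = qPoch q (q ^ n) i * (1 - q ^ (n + i)) := by
        rw [qPoch_succ, ← pow_add]
      have h1t : (1 : ℂ) - t ≠ 0 := by
        have := htq 0; rwa [pow_zero, mul_one] at this
      have htq' : qPoch q (t * q) (n + i) ≠ 0 := by
        intro h
        have : qPoch q t (n + i + 1) = 0 := by rw [hsplit, h, mul_zero]
        exact hne (n + i + 1) this
      rw [hqt_comm, show n + (i + 1) = n + i + 1 by ring, hQsucc, hsucc]
      have e : qPoch q (t * q) (n + i) = qPoch q t (n + i) * (1 - t * q ^ (n + i)) / (1 - t) := by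
        rw [← hsucc, hsplit]
        field_simp
      rw [e]
      have h2 := hne (n + i)
      have h3 := htq (n + i)
      field_simp
      ring

lemma Dq_const_mul (q C : ℂ) (u : ℂ → ℂ) :
    ∀ k : ℕ, (Dq q)^[k] (fun t => C * u t) = fun t => C * (Dq q)^[k] u t := by
  intro k
  induction k with
  | zero => rfl
  | succ k ih =>
      rw [Function.iterate_succ_apply', Function.iterate_succ_apply', ih]
      funext t
      show (C * (Dq q)^[k] u t - C * (Dq q)^[k] u (q * t)) / t = _
      rw [show Dq q ((Dq q)^[k] u) t = ((Dq q)^[k] u t - (Dq q)^[k] u (q * t)) / t from rfl]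
      rw [← mul_sub, mul_div_assoc]

lemma geom_partial_le {Q : ℝ} (h0 : 0 ≤ Q) (h1 : Q < 1) (N : ℕ) :
    ∑ j ∈ Finset.range N, Q ^ j ≤ (1 - Q)⁻¹ := by
  have hs : Summable (fun j : ℕ => Q ^ j) := summable_geometric_of_lt_one h0 h1
  calc ∑ j ∈ Finset.range N, Q ^ j ≤ ∑' j : ℕ, Q ^ j :=
        Summable.sum_le_tsum _ (fun j _ => pow_nonneg h0 j) hs
    _ = (1 - Q)⁻¹ := tsum_geometric_of_lt_one h0 h1

lemma norm_qPoch_le {q : ℂ} (hq1 : ‖q‖ < 1) (x : ℂ) (N : ℕ) :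
    ‖qPoch q x N‖ ≤ Real.exp (‖x‖ / (1 - ‖q‖)) := by
  have hQ0 : (0:ℝ) ≤ ‖q‖ := norm_nonneg q
  have hQ1 : ‖q‖ < 1 := by exact hq1
  calc ‖qPoch q x N‖ = ∏ j ∈ Finset.range N, ‖1 - x * q ^ j‖ := by
        rw [qPoch]; exact norm_prod _ _
    _ ≤ ∏ j ∈ Finset.range N, Real.exp (‖x‖ * ‖q‖ ^ j) := by
        apply Finset.prod_le_prod (fun j _ => norm_nonneg _)
        intro j _
        calc ‖1 - x * q ^ j‖ ≤ ‖(1:ℂ)‖ + ‖x * q ^ j‖ := norm_sub_le _ _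
          _ = ‖x‖ * ‖q‖ ^ j + 1 := by rw [norm_one, norm_mul, norm_pow]; ring
          _ ≤ Real.exp (‖x‖ * ‖q‖ ^ j) := Real.add_one_le_exp _
    _ = Real.exp (∑ j ∈ Finset.range N, ‖x‖ * ‖q‖ ^ j) := (Real.exp_sum _ _).symm
    _ ≤ Real.exp (‖x‖ / (1 - ‖q‖)) := by
        apply Real.exp_le_exp.2
        rw [← Finset.mul_sum, div_eq_mul_inv]
        exact mul_le_mul_of_nonneg_left (geom_partial_le hQ0 hQ1 N) (norm_nonneg x)

lemma prod_one_sub_ge (s : Finset ℕ) (f : ℕ → ℝ) (h0 : ∀ j ∈ s, 0 ≤ f j)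
    (h1 : ∀ j ∈ s, f j ≤ 1) : 1 - ∑ j ∈ s, f j ≤ ∏ j ∈ s, (1 - f j) := by
  classical
  induction s using Finset.induction_on with
  | empty => simp
  | @insert a s ha ih =>
      have h0' : ∀ j ∈ s, 0 ≤ f j := fun j hj => h0 j (Finset.mem_insert_of_mem hj)
      have h1' : ∀ j ∈ s, f j ≤ 1 := fun j hj => h1 j (Finset.mem_insert_of_mem hj)
      have hsum_nonneg : 0 ≤ ∑ j ∈ s, f j := Finset.sum_nonneg h0'
      have hfa0 : 0 ≤ f a := h0 a (Finset.mem_insert_self a s)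
      have hfa1 : f a ≤ 1 := h1 a (Finset.mem_insert_self a s)
      rw [Finset.sum_insert ha, Finset.prod_insert ha]
      have ihs := ih h0' h1'
      nlinarith [ihs, hfa0, hfa1, hsum_nonneg]

lemma qPoch_lower {q x : ℂ} (hq1 : ‖q‖ < 1)
    (hx : ∀ j : ℕ, 1 - x * q ^ j ≠ 0) :
    ∃ δ : ℝ, 0 < δ ∧ ∀ N : ℕ, δ ≤ ‖qPoch q x N‖ := by
  have hQ0 : (0:ℝ) ≤ ‖q‖ := norm_nonneg q
  have hQ1 : ‖q‖ < 1 := by exact hq1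
  set Q := ‖q‖
  set X := ‖x‖
  have hX0 : 0 ≤ X := norm_nonneg x
  have h1Q : 0 < 1 - Q := by linarith
  obtain ⟨J, hJ⟩ : ∃ J : ℕ, Q ^ J < (1 - Q) / (2 * (X + 1)) := by
    apply exists_pow_lt_of_lt_one _ hQ1
    positivity
  have hXQJ : X * Q ^ J ≤ (1 - Q) / 2 := by
    have h2 : X * Q ^ J ≤ (X + 1) * Q ^ J := by nlinarith [pow_nonneg hQ0 J]
    have h3 : (X + 1) * Q ^ J ≤ (X + 1) * ((1 - Q) / (2 * (X + 1))) := by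
      apply mul_le_mul_of_nonneg_left (le_of_lt hJ) (by linarith)
    have h4 : (X + 1) * ((1 - Q) / (2 * (X + 1))) = (1 - Q) / 2 := by
      field_simp
    linarith
  have htail : ∀ M : ℕ, (1:ℝ)/2 ≤ ‖qPoch q (x * q ^ J) M‖ := by
    intro M
    have h5 : ∀ j : ℕ, X * Q ^ (J + j) ≤ (1 - Q)/2 := by
      intro j
      calc X * Q ^ (J + j) = X * Q ^ J * Q ^ j := by rw [pow_add]; ring
        _ ≤ X * Q ^ J * 1 := by
            apply mul_le_mul_of_nonneg_left (pow_le_one₀ hQ0 (le_of_lt hQ1))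
            positivity
        _ = X * Q ^ J := by ring
        _ ≤ (1 - Q)/2 := hXQJ
    calc (1:ℝ)/2 ≤ 1 - ∑ j ∈ Finset.range M, X * Q ^ (J + j) := by
          have hs : ∑ j ∈ Finset.range M, X * Q ^ (J + j) ≤ X * Q ^ J * (1 - Q)⁻¹ := by
            calc ∑ j ∈ Finset.range M, X * Q ^ (J + j)
                = X * Q ^ J * ∑ j ∈ Finset.range M, Q ^ j := by
                  rw [Finset.mul_sum]
                  apply Finset.sum_congr rfl
                  intro j _
                  rw [pow_add]; ring
              _ ≤ X * Q ^ J * (1 - Q)⁻¹ := by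
                  apply mul_le_mul_of_nonneg_left (geom_partial_le hQ0 hQ1 M)
                  positivity
          have h6 : X * Q ^ J * (1 - Q)⁻¹ ≤ 1/2 := by
            have h6a : X * Q ^ J * (1 - Q)⁻¹ ≤ ((1 - Q)/2) * (1 - Q)⁻¹ :=
              mul_le_mul_of_nonneg_right hXQJ (by positivity)
            have h6b : ((1 - Q)/2) * (1 - Q)⁻¹ = 1/2 := by
              field_simp
            linarith
          linarith
      _ ≤ ∏ j ∈ Finset.range M, (1 - X * Q ^ (J + j)) := by
          apply prod_one_sub_ge
          · intro j _; positivity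
          · intro j _
            have := h5 j
            linarith
      _ ≤ ∏ j ∈ Finset.range M, ‖1 - (x * q ^ J) * q ^ j‖ := by
          apply Finset.prod_le_prod
          · intro j _
            have := h5 j
            linarith
          · intro j _
            have hlow : ‖(1:ℂ)‖ - ‖(x * q ^ J) * q ^ j‖ ≤ ‖1 - (x * q ^ J) * q ^ j‖ :=
              norm_sub_norm_le _ _
            rw [norm_one] at hlow
            have he : ‖(x * q ^ J) * q ^ j‖ = X * Q ^ (J + j) := by
              rw [norm_mul, norm_mul, norm_pow, norm_pow, pow_add]; ring
            rw [he] at hlow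
            linarith
      _ = ‖qPoch q (x * q ^ J) M‖ := by rw [qPoch, norm_prod]
  set m := (Finset.range (J + 1)).inf' (by simp) (fun N => ‖qPoch q x N‖) with hm
  have hm0 : 0 < m := by
    rw [hm, Finset.lt_inf'_iff]
    intro N _
    exact norm_pos_iff.2 (qPoch_ne hx N)
  refine ⟨m / 2, by positivity, ?_⟩
  intro N
  rcases Nat.lt_or_ge N (J + 1) with h | h
  · have : m ≤ ‖qPoch q x N‖ := Finset.inf'_le _ (Finset.mem_range.2 h)
    linarith
  · have hNJ : N = J + (N - J) := by omega
    rw [hNJ, qPoch_add, norm_mul]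
    have h7 : m ≤ ‖qPoch q x J‖ := Finset.inf'_le _ (Finset.self_mem_range_succ J)
    have h8 := htail (N - J)
    calc m / 2 ≤ ‖qPoch q x J‖ * (1/2) := by nlinarith
      _ ≤ ‖qPoch q x J‖ * ‖qPoch q (x * q ^ J) (N - J)‖ := by
          apply mul_le_mul_of_nonneg_left h8 (norm_nonneg _)

/-- The Leibniz-expansion term. -/
noncomputable def W (q a b t : ℂ) (k i n : ℕ) : ℂ :=
  qPoch q a n * qPoch q b n / (qPoch q q n * (a * b) ^ n) * (Ppow q n i * t ^ (n - i)) *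
    (qPoch q (q ^ n) (k - i) / qPoch q (q ^ i * t) (n + (k - i)))

lemma W_summable {q a b t : ℂ} (hq1 : ‖q‖ < 1)
    (hab : a * b ≠ 0) (ht : t ≠ 0) (htab : ‖t / (a * b)‖ < 1)
    (htq : ∀ j : ℕ, 1 - t * q ^ j ≠ 0) (k i : ℕ) :
    Summable (fun n => W q a b t k i n) := by
  have hQ1 : ‖q‖ < 1 := by exact hq1
  have hQ0 : (0:ℝ) ≤ ‖q‖ := norm_nonneg q
  have h1Q : (0:ℝ) < 1 - ‖q‖ := by linarith
  obtain ⟨δq, hδq0, hδq⟩ := qPoch_lower hq1 (qq_factor_ne hq1)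
  have hqit : ∀ j : ℕ, 1 - (q ^ i * t) * q ^ j ≠ 0 := by
    intro j
    have := htq (i + j)
    rw [pow_add] at this
    convert this using 2
    ring
  obtain ⟨δ2, hδ20, hδ2⟩ := qPoch_lower hq1 hqit
  set Ea := Real.exp (‖a‖ / (1 - ‖q‖))
  set Eb := Real.exp (‖b‖ / (1 - ‖q‖))
  set Eq1 := Real.exp (1 / (1 - ‖q‖))
  have hEa0 : 0 < Ea := Real.exp_pos _
  have hEb0 : 0 < Eb := Real.exp_pos _
  have hEq10 : 0 < Eq1 := Real.exp_pos _
  have hT0 : (0:ℝ) < ‖t‖ := norm_pos_iff.2 ht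
  set r := ‖t‖ / ‖a * b‖ with hr
  have hAB0 : (0:ℝ) < ‖a * b‖ := norm_pos_iff.2 hab
  have hr1 : r < 1 := by
    have : ‖t / (a * b)‖ = ‖t‖ / ‖a * b‖ := by
      rw [norm_div]
    rwa [this] at htab
  have hr0 : 0 ≤ r := by positivity
  set K := Ea * Eb * (2 ^ i * Eq1) / (δq * δ2 * ‖t‖ ^ i) with hK
  have hK0 : 0 ≤ K := by positivity
  apply Summable.of_norm_bounded (g := fun n => K * r ^ n)
    (((summable_geometric_of_lt_one hr0 hr1).mul_left K))
  intro n
  rcases Nat.lt_or_ge n i with h | h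
  · rw [W, Ppow_zero_of_lt h]
    simp only [zero_mul, mul_zero, norm_zero]
    positivity
  have hWeq : W q a b t k i n =
      qPoch q a n * qPoch q b n * (Ppow q n i * t ^ (n - i)) * qPoch q (q ^ n) (k - i) /
        (qPoch q q n * (a * b) ^ n * qPoch q (q ^ i * t) (n + (k - i))) := by
    rw [W, div_mul_eq_mul_div, div_mul_div_comm]
  rw [hWeq, norm_div]
  have hnum : ‖qPoch q a n * qPoch q b n * (Ppow q n i * t ^ (n - i)) * qPoch q (q ^ n) (k - i)‖
      ≤ Ea * Eb * (2 ^ i * ‖t‖ ^ (n - i)) * Eq1 := by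
    simp only [norm_mul, norm_pow]
    have hPp : ‖Ppow q n i‖ ≤ 2 ^ i := by
      rw [Ppow]
      calc ‖∏ j ∈ Finset.range i, (1 - q ^ (n - j))‖
          = ∏ j ∈ Finset.range i, ‖1 - q ^ (n - j)‖ := norm_prod _ _
        _ ≤ ∏ j ∈ Finset.range i, (2:ℝ) := by
            apply Finset.prod_le_prod (fun j _ => norm_nonneg _)
            intro j _
            calc ‖1 - q ^ (n - j)‖ ≤ ‖(1:ℂ)‖ + ‖q ^ (n - j)‖ := norm_sub_le _ _
              _ ≤ 1 + 1 := by
                  rw [norm_one, norm_pow]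
                  have : ‖q‖ ^ (n - j) ≤ 1 := pow_le_one₀ hQ0 (le_of_lt hQ1)
                  linarith
              _ = 2 := by norm_num
        _ = 2 ^ i := by rw [Finset.prod_const, Finset.card_range]
    have hQn : ‖qPoch q (q ^ n) (k - i)‖ ≤ Eq1 := by
      calc ‖qPoch q (q ^ n) (k - i)‖ ≤ Real.exp (‖q ^ n‖ / (1 - ‖q‖)) :=
            norm_qPoch_le hq1 _ _
        _ ≤ Eq1 := by
            apply Real.exp_le_exp.2
            apply div_le_div_of_nonneg_right ?_ h1Q.le
            rw [norm_pow]
            exact pow_le_one₀ hQ0 (le_of_lt hQ1)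
    gcongr <;> first
      | exact norm_qPoch_le hq1 _ _
      | exact hPp
      | exact hQn
      | exact le_refl _
      | positivity
  have hden : δq * ‖a * b‖ ^ n * δ2
      ≤ ‖qPoch q q n * (a * b) ^ n * qPoch q (q ^ i * t) (n + (k - i))‖ := by
    simp only [norm_mul, norm_pow]
    gcongr <;> first
      | exact hδq n
      | exact hδ2 _
      | exact le_refl _
      | positivity
  calc ‖qPoch q a n * qPoch q b n * (Ppow q n i * t ^ (n - i)) * qPoch q (q ^ n) (k - i)‖ /
        ‖qPoch q q n * (a * b) ^ n * qPoch q (q ^ i * t) (n + (k - i))‖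
      ≤ (Ea * Eb * (2 ^ i * ‖t‖ ^ (n - i)) * Eq1) / (δq * ‖a * b‖ ^ n * δ2) := by
        apply div_le_div₀ (by positivity) hnum (by positivity) hden
    _ = K * r ^ n := by
        have htpow : ‖t‖ ^ (n - i) = ‖t‖ ^ n / ‖t‖ ^ i := by
          rw [eq_div_iff (by positivity), ← pow_add]
          congr 1
          omega
        rw [htpow, hK, hr, div_pow]
        field_simp

lemma iterate_tsum {q : ℂ} (u : ℕ → ℂ → ℂ) (S : Set ℂ) (hS : ∀ t ∈ S, q * t ∈ S)
    (hsum : ∀ m : ℕ, ∀ t ∈ S, Summable (fun n => (Dq q)^[m] (u n) t)) :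
    ∀ k : ℕ, ∀ t ∈ S, (Dq q)^[k] (fun s => ∑' n, u n s) t = ∑' n, (Dq q)^[k] (u n) t := by
  intro k
  induction k with
  | zero => intro t _; simp
  | succ k ih =>
      intro t ht
      rw [Function.iterate_succ_apply']
      show ((Dq q)^[k] (fun s => ∑' n, u n s) t - (Dq q)^[k] (fun s => ∑' n, u n s) (q * t)) / t
        = _
      rw [ih t ht, ih (q * t) (hS t ht),
        ← Summable.tsum_sub (hsum k t ht) (hsum k (q * t) (hS t ht)), ← tsum_div_const]
      apply tsum_congr
      intro n
      rw [Function.iterate_succ_apply']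
      rfl

lemma derivClosed {q a b : ℂ} (hq0 : 0 < ‖q‖) (hq1 : ‖q‖ < 1)
    (n k : ℕ) (t : ℂ) (ht : t ≠ 0) (htq : ∀ j : ℕ, 1 - t * q ^ j ≠ 0) :
    (Dq q)^[k]
        (fun s => qPoch q a n * qPoch q b n / (qPoch q q n * (a * b) ^ n) *
          (s ^ n * (qPoch q s n)⁻¹)) t
      = ∑ i ∈ Finset.range (k + 1), qBinom q k i * W q a b t k i n := by
  have hqne : q ≠ 0 := by
    intro h; rw [h] at hq0; simp at hq0
  rw [Dq_const_mul]
  have hL := qLeibniz hq0 hq1 (fun s => s ^ n) (fun s => (qPoch q s n)⁻¹) k t ht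
  beta_reduce at hL
  beta_reduce
  rw [hL, Finset.mul_sum]
  apply Finset.sum_congr rfl
  intro i _
  have hsi : q ^ i * t ≠ 0 := mul_ne_zero (pow_ne_zero _ hqne) ht
  have hqit : ∀ j : ℕ, 1 - (q ^ i * t) * q ^ j ≠ 0 := by
    intro j
    have := htq (i + j)
    rw [pow_add] at this
    convert this using 2
    ring
  rw [Dq_pow hqne n i t ht, Dq_invPoch hqne n (k - i) (q ^ i * t) hsi hqit, W]
  ring

end S14

open S14 in
theorem stmt14 (q a b c : ℂ) (hq0 : 0 < ‖q‖) (hq1 : ‖q‖ < 1)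
    (ha : a ≠ 0) (hb : b ≠ 0) (hc : c ≠ 0)
    (hcab : ‖c / (a * b)‖ < 1)
    (hcq : ∀ j : ℕ, 1 - c * q ^ j ≠ 0) (k : ℕ) :
    (Dq q)^[k]
        (fun t => ∑' n : ℕ,
          qPoch q a n * qPoch q b n * t ^ n /
            (qPoch q q n * qPoch q t n * (a * b) ^ n)) c =
      1 / qPoch q c k *
        ∑ i ∈ Finset.range (k + 1),
          qBinom q k i *
            (qPoch q a i * qPoch q b i * qPoch q c i /
              ((a * b) ^ i * qPoch q (c * q ^ k) i)) *
            ∑' n : ℕ,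
              qPoch q (a * q ^ i) n * qPoch q (b * q ^ i) n *
                qPoch q (q ^ (n + i)) (k - i) * (c / (a * b)) ^ n /
                (qPoch q (c * q ^ (k + i)) n * qPoch q q n) := by
  have hqne : q ≠ 0 := by
    intro h; rw [h] at hq0; simp at hq0
  have hab : a * b ≠ 0 := mul_ne_zero ha hb
  set S : Set ℂ :=
    {t : ℂ | t ≠ 0 ∧ ‖t / (a * b)‖ < 1 ∧ ∀ j : ℕ, 1 - t * q ^ j ≠ 0} with hSdef
  have hS : ∀ t ∈ S, q * t ∈ S := by
    rintro t ⟨ht0, htab, htq⟩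
    refine ⟨mul_ne_zero hqne ht0, ?_, ?_⟩
    · have he : q * t / (a * b) = q * (t / (a * b)) := by ring
      rw [he, norm_mul]
      calc ‖q‖ * ‖t / (a * b)‖
          ≤ 1 * ‖t / (a * b)‖ :=
            mul_le_mul_of_nonneg_right hq1.le (norm_nonneg _)
        _ = ‖t / (a * b)‖ := one_mul _
        _ < 1 := htab
    · intro j
      have := htq (j + 1)
      rw [pow_succ'] at this
      convert this using 2
      ring
  have hcS : c ∈ S := ⟨hc, hcab, hcq⟩
  set u : ℕ → ℂ → ℂ := fun n s =>
    qPoch q a n * qPoch q b n / (qPoch q q n * (a * b) ^ n) * (s ^ n * (qPoch q s n)⁻¹) with hu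
  have hfun : (fun t => ∑' n : ℕ, qPoch q a n * qPoch q b n * t ^ n /
      (qPoch q q n * qPoch q t n * (a * b) ^ n)) = fun t => ∑' n, u n t := by
    funext t
    apply tsum_congr
    intro n
    rw [hu]
    simp only [div_eq_mul_inv, mul_inv]
    ring
  have hsum : ∀ m : ℕ, ∀ t ∈ S, Summable (fun n => (Dq q)^[m] (u n) t) := by
    intro m t htS
    obtain ⟨ht0, htab, htq⟩ := htS
    have hs2 : Summable (fun n => ∑ i ∈ Finset.range (m + 1), qBinom q m i * W q a b t m i n) :=
      summable_sum (fun i _ => (W_summable hq1 hab ht0 htab htq m i).mul_left _)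
    exact hs2.congr (fun n => (derivClosed hq0 hq1 n m t ht0 htq).symm)
  rw [hfun, iterate_tsum u S hS hsum k c hcS]
  have h1 : ∀ n : ℕ, (Dq q)^[k] (u n) c
      = ∑ i ∈ Finset.range (k + 1), qBinom q k i * W q a b c k i n :=
    fun n => derivClosed hq0 hq1 n k c hc hcq
  rw [tsum_congr h1,
    Summable.tsum_finsetSum (fun i _ => (W_summable hq1 hab hc hcab hcq k i).mul_left (qBinom q k i)),
    Finset.mul_sum]
  apply Finset.sum_congr rfl
  intro i hi
  have hik : i ≤ k := by
    have := Finset.mem_range.1 hi; omega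
  rw [← tsum_mul_left, ← tsum_mul_left]
  have hinj : Function.Injective (fun m : ℕ => m + i) := fun x y h => by simpa using h
  have hsupp : Function.support (fun n => qBinom q k i * W q a b c k i n)
      ⊆ Set.range (fun m : ℕ => m + i) := by
    intro n hn
    rcases Nat.lt_or_ge n i with hni | hni
    · exfalso
      apply hn
      simp [W, Ppow_zero_of_lt hni]
    · exact ⟨n - i, by simp; omega⟩
  rw [← Function.Injective.tsum_eq hinj hsupp]
  apply tsum_congr
  intro m
  beta_reduce
  -- per-term identity
  have hP1ne : qPoch q (c * q ^ k) i ≠ 0 := by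
    apply qPoch_ne
    intro j
    have := hcq (k + j)
    rw [pow_add] at this
    convert this using 2
    ring
  have hcine := qPoch_ne hcq i
  have hckne := qPoch_ne hcq k
  have hcbigne := qPoch_ne hcq (i + (m + k))
  have hqqm := qq_ne hq1 m
  have hPpne := Ppow_ne hq1 m i
  rw [W]
  rw [show (m + i) - i = m by omega]
  rw [show (m + i) + (k - i) = m + k by omega]
  have Ea : qPoch q a (m + i) = qPoch q a i * qPoch q (a * q ^ i) m := by
    rw [add_comm]; exact qPoch_add q a i m
  have Eb : qPoch q b (m + i) = qPoch q b i * qPoch q (b * q ^ i) m := by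
    rw [add_comm]; exact qPoch_add q b i m
  have Eqq : qPoch q q (m + i) = qPoch q q m * Ppow q (m + i) i := qq_split q m i
  have Eqi : qPoch q (q ^ i * c) (m + k) = qPoch q c (i + (m + k)) / qPoch q c i := by
    rw [eq_div_iff hcine, qPoch_add q c i (m + k), mul_comm c (q ^ i)]
    ring
  have Eki : qPoch q (c * q ^ (k + i)) m
      = qPoch q c (i + (m + k)) / (qPoch q c k * qPoch q (c * q ^ k) i) := by
    rw [eq_div_iff (mul_ne_zero hckne hP1ne),
      show i + (m + k) = k + (i + m) by ring,
      qPoch_add q c k (i + m), qPoch_add q (c * q ^ k) i m,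
      show c * q ^ k * q ^ i = c * q ^ (k + i) by rw [mul_assoc, ← pow_add]]
    ring
  rw [Ea, Eb, Eqq, Eqi, Eki]
  have hP1ne' : qPoch q (q ^ k * c) i ≠ 0 := by
    rw [mul_comm]; exact hP1ne
  have hp1 := pow_ne_zero i ha
  have hp2 := pow_ne_zero m ha
  have hp3 := pow_ne_zero i hb
  have hp4 := pow_ne_zero m hb
  have hD' : qPoch q c (i + m + k) ≠ 0 := by
    rw [show i + m + k = i + (m + k) from by omega]
    exact hcbigne
  field_simp [ha, hb, hqqm, hckne, hP1ne, hP1ne', hcine, hcbigne, hD', hPpne]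
  rw [div_pow, pow_add]
  field_simp
  ring
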